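/- Let s ∈ S, z ∈ I_* with sz < z, and y ∈ W. Then: (i) (u+1)X^z_y = −u X^{sz}_y + X^{sz}_{ys} if sz = zs* and ys > y; (ii) (u+1)X^z_y = u² X^{sz}_{ys} + (u²−u−1) X^{sz}_y if sz = zs* and ys < y; (iii) X^z_y = X^{szs*}_{ys} if sz ≠ zs* and ys > y; (iv) X^z_y = u² X^{szs*}_{ys} + (u²−1) X^{szs*}_y if sz ≠ zs* and ys < y. -/

import Mathlib

open Polynomial
open scoped Classical

namespace St9

variable {G : Type*} [Group G]

lemma conj_self_pow {x q : G} (hxi : x⁻¹ = x) (hxq : x * q * x = q⁻¹) (n : ℕ) :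
    x * q ^ n * x = (q ^ n)⁻¹ := by
  have hx : x * x = 1 := by nth_rewrite 2 [← hxi]; exact mul_inv_cancel x
  induction n with
  | zero => simpa using hx
  | succ k ih =>
    have expand : (x * q ^ k * x) * (x * q * x) = x * q ^ (k+1) * x := by
      rw [pow_succ]
      calc (x * q ^ k * x) * (x * q * x) = x * q ^ k * (x * x) * q * x := by group
        _ = x * (q ^ k * q) * x := by rw [hx]; group
    rw [← expand, ih, hxq, ← mul_inv_rev, ← pow_succ']

lemma dihedral {x y : G} (hx : x * x = 1) (hy : y * y = 1) {m : ℕ} (hq : (x * y) ^ m = 1)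
    (d : ℕ) :
    ((if Even d then (1:G) else y) * (x*y)^(d/2))⁻¹ * (if Even d then y else x) *
      ((if Even d then (1:G) else y) * (x*y)^(d/2)) =
    ((if Even (d+m) then (1:G) else y) * (x*y)^((d+m)/2))⁻¹ * (if Even (d+m) then y else x) *
      ((if Even (d+m) then (1:G) else y) * (x*y)^((d+m)/2)) := by
  have hxi : x⁻¹ = x := inv_eq_of_mul_eq_one_right hx
  have hyi : y⁻¹ = y := inv_eq_of_mul_eq_one_right hy
  set q := x * y with hqdef
  have hxq : x * q * x = q⁻¹ := by
    rw [hqdef, mul_inv_rev, hxi, hyi, show x * (x * y) * x = x * x * y * x by group, hx, one_mul]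
  have hyq : y * q * y = q⁻¹ := by
    rw [hqdef, mul_inv_rev, hxi, hyi, show y * (x * y) * y = y * x * (y * y) by group, hy, mul_one]
  have kx : ∀ n, x * q ^ n * x = (q ^ n)⁻¹ := conj_self_pow hxi hxq
  have ky : ∀ n, y * q ^ n * y = (q ^ n)⁻¹ := conj_self_pow hyi hyq
  have sy : ∀ n : ℕ, q ^ n * y = y * (q ^ n)⁻¹ := fun n => by
    calc q ^ n * y = y⁻¹ * (y * q ^ n * y) := by group
      _ = y * (q ^ n)⁻¹ := by rw [ky n, hyi]
  have sx : ∀ n : ℕ, q ^ n * x = x * (q ^ n)⁻¹ := fun n => by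
    calc q ^ n * x = x⁻¹ * (x * q ^ n * x) := by group
      _ = x * (q ^ n)⁻¹ := by rw [kx n, hxi]
  rcases Nat.even_or_odd d with hd | hd <;> rcases Nat.even_or_odd m with hm | hm
  · -- d even, m even
    obtain ⟨c, rfl⟩ := hd
    obtain ⟨e, rfl⟩ := hm
    have h1 : Even (c + c) := ⟨c, rfl⟩
    have h2 : Even (c + c + (e + e)) := ⟨c + e, by ring⟩
    rw [if_pos h1, if_pos h1, if_pos h2, if_pos h2]
    have e1 : (c + c) / 2 = c := by omega
    have e2 : (c + c + (e + e)) / 2 = c + e := by omega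
    rw [e1, e2, one_mul, one_mul]
    have hq2 : q ^ e * q ^ e = 1 := by rw [← pow_add]; exact hq
    have hinv : (q ^ e)⁻¹ = q ^ e := inv_eq_of_mul_eq_one_right hq2
    have hcy : q ^ e * y = y * q ^ e := by rw [sy e, hinv]
    have hcc : q ^ e * q ^ c = q ^ c * q ^ e := pow_mul_comm q e c
    calc (q ^ c)⁻¹ * y * q ^ c
        = (q ^ e)⁻¹ * ((q ^ e * (q ^ c)⁻¹) * y * q ^ c) := by group
      _ = (q ^ e)⁻¹ * (((q ^ c)⁻¹ * q ^ e) * y * q ^ c) := by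
          rw [show q ^ e * (q ^ c)⁻¹ = (q ^ c)⁻¹ * q ^ e from
            (((Commute.refl q).pow_pow e c).inv_right).eq]
      _ = (q ^ e)⁻¹ * ((q ^ c)⁻¹ * (y * q ^ e) * q ^ c) := by rw [← hcy]; group
      _ = (q ^ c * q ^ e)⁻¹ * y * (q ^ e * q ^ c) := by group
      _ = (q ^ (c + e))⁻¹ * y * q ^ (c + e) := by rw [hcc, ← pow_add]
  · -- d even, m odd
    obtain ⟨c, rfl⟩ := hd
    obtain ⟨e, rfl⟩ := hm
    have h1 : Even (c + c) := ⟨c, rfl⟩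
    have h2 : ¬ Even (c + c + (2 * e + 1)) := by rw [Nat.even_iff]; omega
    rw [if_pos h1, if_pos h1, if_neg h2, if_neg h2]
    have e1 : (c + c) / 2 = c := by omega
    have e2 : (c + c + (2 * e + 1)) / 2 = c + e := by omega
    rw [e1, e2, one_mul]
    have hq2 : q ^ (e + 1) * q ^ e = 1 := by rw [← pow_add]; convert hq using 2; omega
    have hinv : (q ^ (e + 1))⁻¹ = q ^ e := inv_eq_of_mul_eq_one_right hq2
    have k1y : q ^ e * y * q ^ e = y := by
      rw [sy e]; group
    have key : y * x * y = (q ^ (e+1))⁻¹ * y * q ^ (e + 1) := by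
      rw [hinv, pow_succ, show q ^ e * y * (q ^ e * q) = (q ^ e * y * q ^ e) * q by group,
        k1y, hqdef]
      group
    have hpow : q ^ (e + 1) * q ^ (c + e) = q ^ c := by
      rw [← pow_add, show e + 1 + (c + e) = c + (2 * e + 1) by omega, pow_add, hq, mul_one]
    calc (q ^ c)⁻¹ * y * q ^ c
        = (q ^ (e+1) * q ^ (c+e))⁻¹ * y * (q ^ (e+1) * q ^ (c+e)) := by rw [hpow]
      _ = (q ^ (c+e))⁻¹ * ((q ^ (e+1))⁻¹ * y * q ^ (e+1)) * q ^ (c+e) := by group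
      _ = (q ^ (c+e))⁻¹ * (y * x * y) * q ^ (c+e) := by rw [← key]
      _ = (y * q ^ (c + e))⁻¹ * x * (y * q ^ (c + e)) := by rw [mul_inv_rev, hyi]; group
  · -- d odd, m even
    obtain ⟨c, rfl⟩ := hd
    obtain ⟨e, rfl⟩ := hm
    have h1 : ¬ Even (2 * c + 1) := by rw [Nat.even_iff]; omega
    have h2 : ¬ Even (2 * c + 1 + (e + e)) := by rw [Nat.even_iff]; omega
    rw [if_neg h1, if_neg h1, if_neg h2, if_neg h2]
    have e1 : (2 * c + 1) / 2 = c := by omega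
    have e2 : (2 * c + 1 + (e + e)) / 2 = c + e := by omega
    rw [e1, e2]
    have hq2 : q ^ e * q ^ e = 1 := by rw [← pow_add]; exact hq
    have hinv : (q ^ e)⁻¹ = q ^ e := inv_eq_of_mul_eq_one_right hq2
    have hcy : q ^ e * y = y * q ^ e := by rw [sy e, hinv]
    have hcx : q ^ e * x = x * q ^ e := by rw [sx e, hinv]
    calc (y * q ^ c)⁻¹ * x * (y * q ^ c)
        = (q ^ e)⁻¹ * ((q ^ e * (q ^ c)⁻¹) * y⁻¹ * x * y * q ^ c) := by group
      _ = (q ^ e)⁻¹ * (((q ^ c)⁻¹ * q ^ e) * y⁻¹ * x * y * q ^ c) := by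
          rw [show q ^ e * (q ^ c)⁻¹ = (q ^ c)⁻¹ * q ^ e from
            (((Commute.refl q).pow_pow e c).inv_right).eq]
      _ = (q ^ e)⁻¹ * ((q ^ c)⁻¹ * ((q ^ e * y) * x * y) * q ^ c) := by rw [hyi]; group
      _ = (q ^ e)⁻¹ * ((q ^ c)⁻¹ * (y * (q ^ e * x) * y) * q ^ c) := by rw [hcy]; group
      _ = (q ^ e)⁻¹ * ((q ^ c)⁻¹ * (y * x * (q ^ e * y)) * q ^ c) := by rw [hcx]; group
      _ = (q ^ e)⁻¹ * ((q ^ c)⁻¹ * (y * x * (y * q ^ e)) * q ^ c) := by rw [hcy]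
      _ = (y * (q ^ c * q ^ e))⁻¹ * x * (y * (q ^ e * q ^ c)) := by
          rw [show (y * (q ^ c * q ^ e))⁻¹ = (q ^ c * q ^ e)⁻¹ * y from by rw [mul_inv_rev, hyi]]
          group
      _ = (y * q ^ (c + e))⁻¹ * x * (y * q ^ (c + e)) := by
          rw [pow_mul_comm q e c, ← pow_add]
  · -- d odd, m odd
    obtain ⟨c, rfl⟩ := hd
    obtain ⟨e, rfl⟩ := hm
    have h1 : ¬ Even (2 * c + 1) := by rw [Nat.even_iff]; omega
    have h2 : Even (2 * c + 1 + (2 * e + 1)) := by rw [Nat.even_iff]; omega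
    rw [if_neg h1, if_neg h1, if_pos h2, if_pos h2]
    have e1 : (2 * c + 1) / 2 = c := by omega
    have e2 : (2 * c + 1 + (2 * e + 1)) / 2 = c + e + 1 := by omega
    rw [e1, e2, one_mul]
    have hq2 : q ^ (e + 1) * q ^ e = 1 := by rw [← pow_add]; convert hq using 2; omega
    have hinv : (q ^ (e + 1))⁻¹ = q ^ e := inv_eq_of_mul_eq_one_right hq2
    have k1y : q ^ e * y * q ^ e = y := by rw [sy e]; group
    have key : y * x * y = (q ^ (e+1))⁻¹ * y * q ^ (e + 1) := by
      rw [hinv, pow_succ, show q ^ e * y * (q ^ e * q) = (q ^ e * y * q ^ e) * q by group,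
        k1y, hqdef]
      group
    calc (y * q ^ c)⁻¹ * x * (y * q ^ c)
        = (q ^ c)⁻¹ * (y * x * y) * q ^ c := by rw [mul_inv_rev, hyi]; group
      _ = (q ^ c)⁻¹ * ((q ^ (e+1))⁻¹ * y * q ^ (e+1)) * q ^ c := by rw [← key]
      _ = (q ^ (e+1) * q ^ c)⁻¹ * y * (q ^ (e+1) * q ^ c) := by group
      _ = (q ^ (c + e + 1))⁻¹ * y * q ^ (c + e + 1) := by
          rw [← pow_add, show e + 1 + c = c + e + 1 by omega]

open CoxeterSystem List

variable {B W : Type} [Group W] {M : CoxeterMatrix B} (cs : CoxeterSystem M W)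

open scoped Classical

lemma alt_drop (i i' : B) : ∀ (j n : ℕ), j ≤ n →
    (CoxeterSystem.alternatingWord i i' n).drop j = CoxeterSystem.alternatingWord i i' (n - j)
  | 0, n, _ => by simp
  | (j+1), 0, h => by omega
  | (j+1), (n+1), h => by
      rw [CoxeterSystem.alternatingWord_succ', List.drop_succ_cons,
        alt_drop i i' j n (by omega)]
      congr 1
      omega

lemma alt_get? (i i' : B) : ∀ (n j : ℕ), j < n →
    (CoxeterSystem.alternatingWord i i' n)[j]? = some (if Even (n - j - 1) then i' else i)
  | 0, j, h => by omega
  | (n+1), 0, h => by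
      rw [CoxeterSystem.alternatingWord_succ']
      simp
  | (n+1), (j+1), h => by
      rw [CoxeterSystem.alternatingWord_succ', List.getElem?_cons_succ,
        alt_get? i i' n j (by omega), show n + 1 - (j + 1) - 1 = n - j - 1 from by omega]

lemma ris_alt_getD (a b : B) (m p : ℕ) (hp : p < 2*m) :
    (cs.rightInvSeq (CoxeterSystem.alternatingWord a b (2*m))).getD p 1 =
      (cs.wordProd (CoxeterSystem.alternatingWord a b (2*m-p-1)))⁻¹ *
        (if Even (2*m-p-1) then cs.simple b else cs.simple a) *
        cs.wordProd (CoxeterSystem.alternatingWord a b (2*m-p-1)) := by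
  rw [cs.getD_rightInvSeq, alt_get? a b (2*m) p hp,
    show (CoxeterSystem.alternatingWord a b (2*m)).drop (p+1)
      = CoxeterSystem.alternatingWord a b (2*m-p-1) by
        rw [alt_drop a b (p+1) (2*m) (by omega), show 2*m - (p+1) = 2*m-p-1 from by omega]]
  simp only [Option.map_some, Option.getD_some, apply_ite cs.simple]

lemma count_ris_alt_even (a b : B) (t : W) :
    Even ((cs.rightInvSeq (CoxeterSystem.alternatingWord a b (2 * M.M a b))).count t) := by
  set m := M.M a b with hm
  set l := cs.rightInvSeq (CoxeterSystem.alternatingWord a b (2*m)) with hl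
  have hlen : l.length = 2*m := by
    rw [hl, cs.length_rightInvSeq, CoxeterSystem.length_alternatingWord]
  have hdt : l.drop m = l.take m := by
    apply List.ext_getElem
    · simp [hlen]; omega
    · intro k h1 h2
      rw [List.getElem_drop, List.getElem_take]
      have hk : k < m := by
        rw [List.length_drop, hlen] at h1; omega
      have hmk : m + k < l.length := by omega
      have hk' : k < l.length := by omega
      rw [← List.getD_eq_getElem l 1 hmk, ← List.getD_eq_getElem l 1 hk']
      rw [hl, ris_alt_getD cs a b m (m+k) (by omega), ris_alt_getD cs a b m k (by omega)]
      rw [show 2*m - (m+k) - 1 = m - k - 1 by omega, show 2*m - k - 1 = (m - k - 1) + m by omega]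
      rw [cs.prod_alternatingWord_eq_mul_pow, cs.prod_alternatingWord_eq_mul_pow]
      exact dihedral (cs.simple_mul_simple_self a) (cs.simple_mul_simple_self b)
        (cs.simple_mul_simple_pow a b) (m - k - 1)
  have hsplit : l = l.take m ++ l.take m := by
    conv_lhs => rw [← List.take_append_drop m l, hdt]
  refine ⟨(l.take m).count t, ?_⟩
  conv_lhs => rw [hsplit]
  rw [List.count_append]

/-- The permutation of `W × ℤˣ` associated to a simple reflection. -/
noncomputable def eta (i : B) : Equiv.Perm (W × ℤˣ) :=
  Function.Involutive.toPerm
    (fun p => (cs.simple i * p.1 * cs.simple i, if p.1 = cs.simple i then -p.2 else p.2))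
    (by
      rintro ⟨t, e⟩
      simp only
      have h1 : cs.simple i * (cs.simple i * t * cs.simple i) * cs.simple i = t := by
        calc cs.simple i * (cs.simple i * t * cs.simple i) * cs.simple i
            = (cs.simple i * cs.simple i) * t * (cs.simple i * cs.simple i) := by group
          _ = t := by rw [cs.simple_mul_simple_self]; group
      have h2 : (cs.simple i * t * cs.simple i = cs.simple i) ↔ t = cs.simple i := by
        constructor
        · intro h
          have h' : cs.simple i * t * cs.simple i * cs.simple i
              = cs.simple i * cs.simple i := by rw [h]
          rw [cs.simple_mul_simple_cancel_right, cs.simple_mul_simple_self] at h'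
          have := mul_eq_one_iff_inv_eq.mp h'
          rw [cs.inv_simple] at this
          exact this.symm
        · intro h
          rw [h, cs.simple_mul_simple_self, one_mul]
      rw [h1]
      by_cases hc : t = cs.simple i
      · rw [if_pos (h2.mpr hc), if_pos hc, neg_neg]
      · rw [if_neg (fun hh => hc (h2.mp hh)), if_neg hc])

lemma eta_apply (i : B) (p : W × ℤˣ) :
    eta cs i p = (cs.simple i * p.1 * cs.simple i, if p.1 = cs.simple i then -p.2 else p.2) := rfl

lemma prod_eta_apply : ∀ (ω : List B) (t : W) (ε : ℤˣ),
    (List.map (eta cs) ω).prod (t, ε) =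
      (cs.wordProd ω * t * (cs.wordProd ω)⁻¹,
        (-1:ℤˣ)^((cs.rightInvSeq ω).count t) * ε)
  | [], t, ε => by simp
  | (i :: ω), t, ε => by
      rw [List.map_cons, List.prod_cons, Equiv.Perm.mul_apply, prod_eta_apply ω t ε, eta_apply]
      have hris : cs.rightInvSeq (i::ω)
          = ((cs.wordProd ω)⁻¹ * cs.simple i * cs.wordProd ω) :: cs.rightInvSeq ω := rfl
      have hcond : (cs.wordProd ω * t * (cs.wordProd ω)⁻¹ = cs.simple i)
          ↔ (t = (cs.wordProd ω)⁻¹ * cs.simple i * cs.wordProd ω) := by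
        constructor
        · intro h; rw [← h]; group
        · intro h; rw [h]; group
      rw [Prod.mk.injEq]
      constructor
      · simp only
        rw [cs.wordProd_cons, mul_inv_rev, cs.inv_simple]
        group
      · simp only
        rw [hris, List.count_cons]
        by_cases hc : t = (cs.wordProd ω)⁻¹ * cs.simple i * cs.wordProd ω
        · rw [if_pos (hcond.mpr hc), if_pos (by simp only [beq_iff_eq]; exact hc.symm),
            pow_add, pow_one, mul_neg_one, neg_mul]
        · rw [if_neg (fun hh => hc (hcond.mp hh)),
            if_neg (by simp only [beq_iff_eq]; exact fun hh => hc hh.symm), add_zero]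

lemma eta_liftable : M.IsLiftable (fun i => eta cs i) := by
  intro a b
  have halt : ∀ (k : ℕ), (List.map (eta cs) (CoxeterSystem.alternatingWord a b (2*k))).prod
      = (eta cs a * eta cs b)^k := by
    intro k; induction k with
    | zero => simp [CoxeterSystem.alternatingWord]
    | succ k ih =>
        have hword : CoxeterSystem.alternatingWord a b (2*(k+1))
            = a :: b :: CoxeterSystem.alternatingWord a b (2*k) := by
          rw [show 2*(k+1) = (2*k+1)+1 by ring, CoxeterSystem.alternatingWord_succ',
            CoxeterSystem.alternatingWord_succ']
          rw [if_neg (by rw [Nat.even_iff]; omega), if_pos (by rw [Nat.even_iff]; omega)]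
        rw [hword, List.map_cons, List.map_cons, List.prod_cons, List.prod_cons, ih,
          pow_succ', ← mul_assoc]
  apply Equiv.ext
  rintro ⟨t, ε⟩
  have h1 : (((fun i => eta cs i) a * (fun i => eta cs i) b) ^ M.M a b) (t, ε)
      = (List.map (eta cs) (CoxeterSystem.alternatingWord a b (2 * M.M a b))).prod (t, ε) := by
    rw [halt (M.M a b)]
  rw [h1, prod_eta_apply]
  have hπ : cs.wordProd (CoxeterSystem.alternatingWord a b (2 * M.M a b)) = 1 := by
    rw [cs.prod_alternatingWord_eq_mul_pow,
      if_pos (even_two_mul (M.M a b)), one_mul,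
      show 2 * M.M a b / 2 = M.M a b by omega, cs.simple_mul_simple_pow]
  rw [hπ, Even.neg_one_pow (count_ris_alt_even cs a b t)]
  simp [Equiv.Perm.one_apply]

/-- The sign representation on reflections. -/
noncomputable def phi : W →* Equiv.Perm (W × ℤˣ) := cs.lift ⟨fun i => eta cs i, eta_liftable cs⟩

lemma phi_wordProd (ω : List B) : phi cs (cs.wordProd ω) = (List.map (eta cs) ω).prod := by
  rw [CoxeterSystem.wordProd, map_list_prod, List.map_map]
  congr 1
  apply List.map_congr_left
  intro i _
  exact cs.lift_apply_simple _ i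

lemma count_parity {ω ω' : List B} (h : cs.wordProd ω = cs.wordProd ω') (t : W) :
    ((-1 : ℤˣ) ^ ((cs.rightInvSeq ω).count t)) = (-1) ^ ((cs.rightInvSeq ω').count t) := by
  have key : (phi cs (cs.wordProd ω)) (t,1) = (phi cs (cs.wordProd ω')) (t,1) := by rw [h]
  rw [phi_wordProd, phi_wordProd, prod_eta_apply, prod_eta_apply] at key
  have := congrArg Prod.snd key
  simpa using this

lemma exchange_mem {ω : List B} (hred : cs.IsReduced ω) {j : B}
    (hdesc : cs.length (cs.wordProd ω * cs.simple j) < cs.length (cs.wordProd ω)) :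
    cs.simple j ∈ cs.rightInvSeq ω := by
  obtain ⟨η, hηred, hηeq⟩ := cs.exists_reduced_word' (cs.wordProd ω * cs.simple j)
  have hπ : cs.wordProd (η.concat j) = cs.wordProd ω := by
    rw [CoxeterSystem.wordProd_concat, ← hηeq, cs.simple_mul_simple_cancel_right]
  have hnot : cs.simple j ∉ cs.rightInvSeq η := by
    intro hmem
    have h2 := (cs.isRightInversion_of_mem_rightInvSeq hηred hmem).2
    rw [← hηeq, cs.simple_mul_simple_cancel_right] at h2
    omega
  have hcount : (cs.rightInvSeq (η.concat j)).count (cs.simple j) = 1 := by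
    rw [cs.rightInvSeq_concat, List.concat_eq_append, List.count_append]
    have hz : (List.map (⇑(MulAut.conj (cs.simple j))) (cs.rightInvSeq η)).count (cs.simple j)
        = 0 := by
      have hfix : (MulAut.conj (cs.simple j)) (cs.simple j) = cs.simple j := by
        rw [MulAut.conj_apply]; group
      calc (List.map (⇑(MulAut.conj (cs.simple j))) (cs.rightInvSeq η)).count (cs.simple j)
          = (List.map (⇑(MulAut.conj (cs.simple j))) (cs.rightInvSeq η)).count
              ((MulAut.conj (cs.simple j)) (cs.simple j)) := by rw [hfix]
        _ = (cs.rightInvSeq η).count (cs.simple j) :=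
            List.count_map_of_injective _ _ (MulAut.conj (cs.simple j)).injective _
        _ = 0 := List.count_eq_zero.mpr hnot
    rw [hz, List.count_singleton, if_pos (by simp), zero_add]
  by_contra hmem
  have h0 : (cs.rightInvSeq ω).count (cs.simple j) = 0 := List.count_eq_zero.mpr hmem
  have hpar := count_parity cs hπ.symm (cs.simple j)
  rw [hcount, h0, pow_one, pow_zero] at hpar
  exact absurd hpar (by decide)

lemma tech {v : W} {a b : B}
    (h1 : cs.length (cs.simple a * v) = cs.length v + 1)
    (h2 : cs.length v < cs.length (v * cs.simple b))
    (h3 : cs.length (cs.simple a * v * cs.simple b) < cs.length (cs.simple a * v)) :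
    cs.simple a * v = v * cs.simple b := by
  obtain ⟨ω, hlen, hprod⟩ : ∃ ω : List B, ω.length = cs.length v ∧ v = cs.wordProd ω :=
    let ⟨ω, h1, h2⟩ := cs.exists_reduced_word v
    ⟨ω, by rw [h2]; exact (show cs.length (cs.wordProd ω) = ω.length from h1).symm, h2⟩
  have hred : cs.IsReduced (a :: ω) := by
    unfold CoxeterSystem.IsReduced
    rw [cs.wordProd_cons, ← hprod, List.length_cons, hlen, h1]
  have hmem : cs.simple b ∈ cs.rightInvSeq (a :: ω) := by
    apply exchange_mem cs hred
    rw [cs.wordProd_cons, ← hprod]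
    exact h3
  have hris : cs.rightInvSeq (a :: ω)
      = ((cs.wordProd ω)⁻¹ * cs.simple a * cs.wordProd ω) :: cs.rightInvSeq ω := rfl
  rw [hris, List.mem_cons] at hmem
  rcases hmem with heq | hmem
  · rw [← hprod] at heq
    rw [heq]
    group
  · exfalso
    have hωred : cs.IsReduced ω := by
      unfold CoxeterSystem.IsReduced
      rw [← hprod, hlen]
    have := (cs.isRightInversion_of_mem_rightInvSeq hωred hmem).2
    rw [← hprod] at this
    omega

variable (st : W ≃* W)

lemma st_wordProd (f : B → B) (hf : ∀ i, st (cs.simple i) = cs.simple (f i)) (ω : List B) :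
    st (cs.wordProd ω) = cs.wordProd (ω.map f) := by
  induction ω with
  | nil => simp
  | cons i ω ih =>
      rw [cs.wordProd_cons, map_mul, hf i, ih, List.map_cons, cs.wordProd_cons]

lemma st_length_le (f : B → B) (hf : ∀ i, st (cs.simple i) = cs.simple (f i)) (w : W) :
    cs.length (st w) ≤ cs.length w := by
  obtain ⟨ω, hlen, hprod⟩ : ∃ ω : List B, ω.length = cs.length w ∧ w = cs.wordProd ω :=
    let ⟨ω, h1, h2⟩ := cs.exists_reduced_word w
    ⟨ω, by rw [h2]; exact (show cs.length (cs.wordProd ω) = ω.length from h1).symm, h2⟩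
  rw [hprod, st_wordProd cs st f hf ω]
  calc cs.length (cs.wordProd (ω.map f)) ≤ (ω.map f).length := cs.length_wordProd_le _
    _ = ω.length := by rw [List.length_map]
    _ = cs.length (cs.wordProd ω) := by rw [hlen, hprod]

lemma st_length (hinv : ∀ w, st (st w) = w)
    (hS : ∀ i : B, ∃ j : B, st (cs.simple i) = cs.simple j) (w : W) :
    cs.length (st w) = cs.length w := by
  choose f hf using hS
  refine le_antisymm (st_length_le cs st f hf w) ?_
  have := st_length_le cs st f hf (st w)
  rwa [hinv] at this

lemma dichotomy (hinv : ∀ w, st (st w) = w)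
    (hS : ∀ i : B, ∃ j : B, st (cs.simple i) = cs.simple j)
    {z : W} (hz : st z = z⁻¹) {i : B}
    (hlt : cs.length (cs.simple i * z) < cs.length z)
    (hne : cs.simple i * z ≠ z * st (cs.simple i)) :
    cs.length (cs.simple i * z * st (cs.simple i)) < cs.length (z * st (cs.simple i)) := by
  obtain ⟨j, hj⟩ := hS i
  rw [hj] at hne ⊢
  have hzs : cs.length (z * cs.simple j) = cs.length (cs.simple i * z) := by
    have e1 : st (z * cs.simple j) = z⁻¹ * cs.simple i := by
      rw [map_mul, hz, ← hj, hinv]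
    have e2 := st_length cs st hinv hS (z * cs.simple j)
    rw [e1] at e2
    rw [← e2, ← cs.length_inv, mul_inv_rev, inv_inv, cs.inv_simple]
  have hv1 : cs.length z = cs.length (cs.simple i * z) + 1 := by
    rcases cs.length_simple_mul z i with hh | hh <;> omega
  by_contra hcon
  push_neg at hcon
  have h1 : cs.length (cs.simple i * (cs.simple i * z)) = cs.length (cs.simple i * z) + 1 := by
    rw [cs.simple_mul_simple_cancel_left]; exact hv1
  have h2 : cs.length (cs.simple i * z) < cs.length (cs.simple i * z * cs.simple j) := by
    have hne3 := cs.length_mul_simple_ne (cs.simple i * z) j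
    omega
  have h3 : cs.length (cs.simple i * (cs.simple i * z) * cs.simple j)
      < cs.length (cs.simple i * (cs.simple i * z)) := by
    rw [cs.simple_mul_simple_cancel_left]
    omega
  have htech := tech cs h1 h2 h3
  rw [cs.simple_mul_simple_cancel_left] at htech
  apply hne
  have hfin : z * cs.simple j = cs.simple i * z := by
    conv_lhs => rw [htech]
    rw [cs.simple_mul_simple_cancel_right]
  exact hfin.symm

end St9


/-- The characterization (Proposition 1.2) of the polynomials `X^z_y ∈ ℤ[u]`, indexed by pairs
`(z, y)` with `z` a twisted involution (`st z = z⁻¹`) and `y ∈ W`: `X^z_1 = δ_{z,1}`, and for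
`s ∈ S`, `y > ys`, the recursions 1.2(i)–(iv) hold. -/
def XRec {B W : Type} [Group W] {M : CoxeterMatrix B} (cs : CoxeterSystem M W)
    (st : W ≃* W) (P : {z : W // st z = z⁻¹} → W → Polynomial ℤ) : Prop :=
  (∀ z : {z : W // st z = z⁻¹}, P z 1 = if z.1 = 1 then 1 else 0) ∧
  ∀ (i : B) (y : W), cs.length (y * cs.simple i) < cs.length y →
    ∀ z : {z : W // st z = z⁻¹},
      (cs.simple i * z.1 = z.1 * st (cs.simple i) →
        cs.length z.1 < cs.length (cs.simple i * z.1) →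
        ∀ h : st (cs.simple i * z.1) = (cs.simple i * z.1)⁻¹,
          P z y = X * P z (y * cs.simple i) +
            (X + 1) * P ⟨cs.simple i * z.1, h⟩ (y * cs.simple i)) ∧
      (cs.simple i * z.1 = z.1 * st (cs.simple i) →
        cs.length (cs.simple i * z.1) < cs.length z.1 →
        ∀ h : st (cs.simple i * z.1) = (cs.simple i * z.1)⁻¹,
          P z y = (X ^ 2 - X - 1) * P z (y * cs.simple i) +
            (X ^ 2 - X) * P ⟨cs.simple i * z.1, h⟩ (y * cs.simple i)) ∧
      (cs.simple i * z.1 ≠ z.1 * st (cs.simple i) →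
        cs.length z.1 < cs.length (cs.simple i * z.1) →
        ∀ h : st (cs.simple i * z.1 * st (cs.simple i)) =
            (cs.simple i * z.1 * st (cs.simple i))⁻¹,
          P z y = P ⟨cs.simple i * z.1 * st (cs.simple i), h⟩ (y * cs.simple i)) ∧
      (cs.simple i * z.1 ≠ z.1 * st (cs.simple i) →
        cs.length (cs.simple i * z.1) < cs.length z.1 →
        ∀ h : st (cs.simple i * z.1 * st (cs.simple i)) =
            (cs.simple i * z.1 * st (cs.simple i))⁻¹,
          P z y = (X ^ 2 - 1) * P z (y * cs.simple i) +
            X ^ 2 * P ⟨cs.simple i * z.1 * st (cs.simple i), h⟩ (y * cs.simple i))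

/-- **Proposition 1.4.** Let `s ∈ S`, `z ∈ I_*` with `sz < z`, and `y ∈ W`.
Then the identities 1.4(i)–(iv) hold. -/
theorem statement9 {B W : Type} [Group W] [Finite B] {M : CoxeterMatrix B}
    (cs : CoxeterSystem M W) (st : W ≃* W)
    (hst_inv : ∀ w, st (st w) = w)
    (hst_S : ∀ i : B, ∃ j : B, st (cs.simple i) = cs.simple j)
    (P : {z : W // st z = z⁻¹} → W → Polynomial ℤ) (hP : XRec cs st P)
    (i : B) (z : {z : W // st z = z⁻¹})
    (hlt : cs.length (cs.simple i * z.1) < cs.length z.1) (y : W) :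
    (cs.simple i * z.1 = z.1 * st (cs.simple i) →
      cs.length y < cs.length (y * cs.simple i) →
      ∀ h : st (cs.simple i * z.1) = (cs.simple i * z.1)⁻¹,
        (X + 1) * P z y = -X * P ⟨cs.simple i * z.1, h⟩ y +
          P ⟨cs.simple i * z.1, h⟩ (y * cs.simple i)) ∧
    (cs.simple i * z.1 = z.1 * st (cs.simple i) →
      cs.length (y * cs.simple i) < cs.length y →
      ∀ h : st (cs.simple i * z.1) = (cs.simple i * z.1)⁻¹,
        (X + 1) * P z y = X ^ 2 * P ⟨cs.simple i * z.1, h⟩ (y * cs.simple i) +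
          (X ^ 2 - X - 1) * P ⟨cs.simple i * z.1, h⟩ y) ∧
    (cs.simple i * z.1 ≠ z.1 * st (cs.simple i) →
      cs.length y < cs.length (y * cs.simple i) →
      ∀ h : st (cs.simple i * z.1 * st (cs.simple i)) =
          (cs.simple i * z.1 * st (cs.simple i))⁻¹,
        P z y = P ⟨cs.simple i * z.1 * st (cs.simple i), h⟩ (y * cs.simple i)) ∧
    (cs.simple i * z.1 ≠ z.1 * st (cs.simple i) →
      cs.length (y * cs.simple i) < cs.length y →
      ∀ h : st (cs.simple i * z.1 * st (cs.simple i)) =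
          (cs.simple i * z.1 * st (cs.simple i))⁻¹,
        P z y = X ^ 2 * P ⟨cs.simple i * z.1 * st (cs.simple i), h⟩ (y * cs.simple i) +
          (X ^ 2 - 1) * P ⟨cs.simple i * z.1 * st (cs.simple i), h⟩ y) := by
  have hrec := hP.2
  have hs2 : st (cs.simple i) * st (cs.simple i) = 1 := by
    rw [← map_mul, cs.simple_mul_simple_self, map_one]
  refine ⟨?_, ?_, ?_, ?_⟩
  · -- 1.4(i)
    intro hcomm hy h
    have hdesc : cs.length ((y * cs.simple i) * cs.simple i) < cs.length (y * cs.simple i) := by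
      rw [cs.simple_mul_simple_cancel_right]; exact hy
    have h' : st (cs.simple i * (cs.simple i * z.1)) = (cs.simple i * (cs.simple i * z.1))⁻¹ := by
      rw [cs.simple_mul_simple_cancel_left]; exact z.2
    have hc1 : cs.simple i * (cs.simple i * z.1) = (cs.simple i * z.1) * st (cs.simple i) := by
      rw [cs.simple_mul_simple_cancel_left, hcomm, mul_assoc, hs2, mul_one]
    have hc2 : cs.length (cs.simple i * z.1)
        < cs.length (cs.simple i * (cs.simple i * z.1)) := by
      rw [cs.simple_mul_simple_cancel_left]; exact hlt
    have heq := (hrec i (y * cs.simple i) hdesc ⟨cs.simple i * z.1, h⟩).1 hc1 hc2 h'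
    dsimp only at heq
    have hsub : (⟨cs.simple i * (cs.simple i * z.1), h'⟩ : {z : W // st z = z⁻¹}) = z :=
      Subtype.ext (cs.simple_mul_simple_cancel_left i)
    rw [hsub, cs.simple_mul_simple_cancel_right] at heq
    linear_combination -heq
  · -- 1.4(ii)
    intro hcomm hy h
    have e1 := (hrec i y hy z).2.1 hcomm hlt h
    have h' : st (cs.simple i * (cs.simple i * z.1)) = (cs.simple i * (cs.simple i * z.1))⁻¹ := by
      rw [cs.simple_mul_simple_cancel_left]; exact z.2
    have hc1 : cs.simple i * (cs.simple i * z.1) = (cs.simple i * z.1) * st (cs.simple i) := by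
      rw [cs.simple_mul_simple_cancel_left, hcomm, mul_assoc, hs2, mul_one]
    have hc2 : cs.length (cs.simple i * z.1)
        < cs.length (cs.simple i * (cs.simple i * z.1)) := by
      rw [cs.simple_mul_simple_cancel_left]; exact hlt
    have e2 := (hrec i y hy ⟨cs.simple i * z.1, h⟩).1 hc1 hc2 h'
    dsimp only at e2
    have hsub : (⟨cs.simple i * (cs.simple i * z.1), h'⟩ : {z : W // st z = z⁻¹}) = z :=
      Subtype.ext (cs.simple_mul_simple_cancel_left i)
    rw [hsub] at e2
    linear_combination (X + 1 : Polynomial ℤ) * e1 - (X ^ 2 - X - 1 : Polynomial ℤ) * e2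
  · -- 1.4(iii)
    intro hne hy h
    have hdesc : cs.length ((y * cs.simple i) * cs.simple i) < cs.length (y * cs.simple i) := by
      rw [cs.simple_mul_simple_cancel_right]; exact hy
    have hval : cs.simple i * (cs.simple i * z.1 * st (cs.simple i)) * st (cs.simple i)
        = z.1 := by
      rw [← mul_assoc, cs.simple_mul_simple_cancel_left, mul_assoc, hs2, mul_one]
    have h'' : st (cs.simple i * (cs.simple i * z.1 * st (cs.simple i)) * st (cs.simple i))
        = (cs.simple i * (cs.simple i * z.1 * st (cs.simple i)) * st (cs.simple i))⁻¹ := by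
      rw [hval]; exact z.2
    have hc1 : cs.simple i * (cs.simple i * z.1 * st (cs.simple i))
        ≠ (cs.simple i * z.1 * st (cs.simple i)) * st (cs.simple i) := by
      rw [← mul_assoc, cs.simple_mul_simple_cancel_left, mul_assoc, hs2, mul_one]
      exact fun hh => hne hh.symm
    have hc2 : cs.length (cs.simple i * z.1 * st (cs.simple i))
        < cs.length (cs.simple i * (cs.simple i * z.1 * st (cs.simple i))) := by
      rw [← mul_assoc, cs.simple_mul_simple_cancel_left]
      exact St9.dichotomy cs st hst_inv hst_S z.2 hlt hne
    have heq := (hrec i (y * cs.simple i) hdesc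
      ⟨cs.simple i * z.1 * st (cs.simple i), h⟩).2.2.1 hc1 hc2 h''
    dsimp only at heq
    have hsub : (⟨cs.simple i * (cs.simple i * z.1 * st (cs.simple i)) * st (cs.simple i), h''⟩
        : {z : W // st z = z⁻¹}) = z := Subtype.ext hval
    rw [hsub, cs.simple_mul_simple_cancel_right] at heq
    exact heq.symm
  · -- 1.4(iv)
    intro hne hy h
    have e1 := (hrec i y hy z).2.2.2 hne hlt h
    have hval : cs.simple i * (cs.simple i * z.1 * st (cs.simple i)) * st (cs.simple i)
        = z.1 := by
      rw [← mul_assoc, cs.simple_mul_simple_cancel_left, mul_assoc, hs2, mul_one]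
    have h'' : st (cs.simple i * (cs.simple i * z.1 * st (cs.simple i)) * st (cs.simple i))
        = (cs.simple i * (cs.simple i * z.1 * st (cs.simple i)) * st (cs.simple i))⁻¹ := by
      rw [hval]; exact z.2
    have hc1 : cs.simple i * (cs.simple i * z.1 * st (cs.simple i))
        ≠ (cs.simple i * z.1 * st (cs.simple i)) * st (cs.simple i) := by
      rw [← mul_assoc, cs.simple_mul_simple_cancel_left, mul_assoc, hs2, mul_one]
      exact fun hh => hne hh.symm
    have hc2 : cs.length (cs.simple i * z.1 * st (cs.simple i))
        < cs.length (cs.simple i * (cs.simple i * z.1 * st (cs.simple i))) := by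
      rw [← mul_assoc, cs.simple_mul_simple_cancel_left]
      exact St9.dichotomy cs st hst_inv hst_S z.2 hlt hne
    have e2 := (hrec i y hy ⟨cs.simple i * z.1 * st (cs.simple i), h⟩).2.2.1 hc1 hc2 h''
    dsimp only at e2
    have hsub : (⟨cs.simple i * (cs.simple i * z.1 * st (cs.simple i)) * st (cs.simple i), h''⟩
        : {z : W // st z = z⁻¹}) = z := Subtype.ext hval
    rw [hsub] at e2
    linear_combination e1 - (X ^ 2 - 1 : Polynomial ℤ) * e2
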